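/- Let G be a DAG over X = O ∪ L ∪ S ∪ M, where M is a set of missingness-indicator vertices none of which is an ancestor of any vertex in O ∪ S nor of any other vertex of M. Let O_i, O_j ∈ O, W ⊆ O \ {O_i, O_j}, and let S_t ⊆ S ∪ M and S_l ⊆ S ∪ M be sets with S_t ⊆ S_l and S_l \ S_t ⊆ M. If O_i and O_j are d-connected given W ∪ S_t, then O_i and O_j are d-connected given W ∪ S_l. -/

import Mathlib

variable {V : Type*}

/-- `Ancestor E x y`: there is a (possibly trivial) directed path from `x` to `y`. -/
def Ancestor (E : V → V → Prop) (x y : V) : Prop :=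
  Relation.ReflTransGen E x y

/-- A directed graph is acyclic (a DAG) if it has no directed cycles. -/
def Acyclic (E : V → V → Prop) : Prop :=
  ∀ v : V, ¬ Relation.TransGen E v v

/-- `v` is a collider on the path (vertex list) `l`. -/
def ColliderOn (E : V → V → Prop) (l : List V) (v : V) : Prop :=
  ∃ x y : V, [x, v, y] <:+: l ∧ E x v ∧ E y v

/-- `v` is an interior non-collider on the path `l`. -/
def NonColliderOn (E : V → V → Prop) (l : List V) (v : V) : Prop :=
  (∃ x y : V, [x, v, y] <:+: l) ∧ ¬ ColliderOn E l v

/-- `l` is a path between `a` and `b` that is active given the conditioning set `C`: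
every collider on `l` has a descendant in `C` and no non-collider on `l` is in `C`. -/
def ActivePath (E : V → V → Prop) (C : Set V) (a b : V) (l : List V) : Prop :=
  l.head? = some a ∧ l.getLast? = some b ∧ l.Nodup ∧
  l.Chain' (fun u v => E u v ∨ E v u) ∧
  (∀ v, ColliderOn E l v → ∃ d ∈ C, Ancestor E v d) ∧
  (∀ v, NonColliderOn E l v → v ∉ C)

/-- `a` and `b` are d-connected given `C`. -/
def DConn (E : V → V → Prop) (C : Set V) (a b : V) : Prop :=
  ∃ l : List V, ActivePath E C a b l

/-- `a` and `b` are d-separated given `C`. -/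
def DSep (E : V → V → Prop) (C : Set V) (a b : V) : Prop :=
  ¬ DConn E C a b


private lemma forward_anc (E : V → V → Prop) (C : Set V) (b : V) (l : List V)
    (hlast : l.getLast? = some b)
    (hchain : l.Chain' (fun u v => E u v ∨ E v u))
    (hcol : ∀ u v w, [u, v, w] <:+: l → E u v → E w v → ∃ d ∈ C, Ancestor E v d) :
    ∀ rest v x, (v :: x :: rest) <:+ l → E v x →
      ∃ d, (d ∈ C ∨ d = b) ∧ Ancestor E v d := by
  intro rest
  induction rest with
  | nil =>
      intro v x hsuf hE
      obtain ⟨s, hs⟩ := hsuf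
      have hx : l.getLast? = some x := by
        subst hs
        simp [List.getLast?_append]
      rw [hlast] at hx
      have hbx : b = x := Option.some.inj hx
      exact ⟨x, Or.inr hbx.symm, Relation.ReflTransGen.single hE⟩
  | cons y t ih =>
      intro v x hsuf hE
      have hch : (v :: x :: y :: t).Chain' (fun u v => E u v ∨ E v u) :=
        hchain.suffix hsuf
      have hxy : E x y ∨ E y x := by
        rcases hch with _
        · exact (List.isChain_cons_cons.mp (List.isChain_cons_cons.mp hch).2).1
      rcases hxy with hxy | hyx
      · obtain ⟨d, hd, hxd⟩ := ih x y ((List.suffix_cons v (x :: y :: t)).trans hsuf) hxy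
        exact ⟨d, hd, Relation.ReflTransGen.head hE hxd⟩
      · have hinf : [v, x, y] <:+: l :=
          (List.IsPrefix.isInfix ⟨t, rfl⟩).trans hsuf.isInfix
        obtain ⟨d, hd, hxd⟩ := hcol v x y hinf hE hyx
        exact ⟨d, Or.inl hd, Relation.ReflTransGen.head hE hxd⟩

/-- Test-wise deletion lemma: under the assumption that no missingness indicator in `M`
is an ancestor of any vertex of `O ∪ S` or of any other vertex of `M`, d-connection given
`W ∪ S_t` implies d-connection given `W ∪ S_l`, where `S_t ⊆ S_l` and `S_l \ S_t ⊆ M`. -/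
theorem stmt_1 (E : V → V → Prop) (hacyc : Acyclic E) (O L S M : Set V)
    (hM : ∀ m ∈ M, ∀ x : V, Ancestor E m x → x ∉ O ∪ S ∧ (x ∈ M → x = m))
    (Oi Oj : V) (hOi : Oi ∈ O) (hOj : Oj ∈ O)
    (W : Set V) (hW : W ⊆ O \ {Oi, Oj})
    (St Sl : Set V) (hSt : St ⊆ S ∪ M) (hSl : Sl ⊆ S ∪ M)
    (hsub : St ⊆ Sl) (hdiff : Sl \ St ⊆ M)
    (hconn : DConn E (W ∪ St) Oi Oj) :
    DConn E (W ∪ Sl) Oi Oj := by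
  obtain ⟨l, h1, h2, h3, h4, h5, h6⟩ := hconn
  have hcol : ∀ u v w, [u, v, w] <:+: l → E u v → E w v →
      ∃ d ∈ (W ∪ St), Ancestor E v d := by
    intro u v w hinf h1' h2'
    exact h5 v ⟨u, w, hinf, h1', h2'⟩
  refine ⟨l, h1, h2, h3, h4, ?_, ?_⟩
  · intro v hv
    obtain ⟨d, hd, ha⟩ := h5 v hv
    exact ⟨d, by rcases hd with h | h; exacts [Or.inl h, Or.inr (hsub h)], ha⟩
  · intro v hv hvin
    have hnotold : v ∉ W ∪ St := h6 v hv
    rcases hvin with hvW | hvSl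
    · exact hnotold (Or.inl hvW)
    by_cases hvSt : v ∈ St
    · exact hnotold (Or.inr hvSt)
    have hvM : v ∈ M := hdiff ⟨hvSl, hvSt⟩
    -- v ∉ O ∪ S, by reflexivity
    obtain ⟨⟨x, y, hinf⟩, hnc⟩ := hv
    have hedge : E x v ∨ E v x := by
      have := h4.infix hinf
      exact (List.isChain_cons_cons.mp this).1
    have hedge2 : E v y ∨ E y v := by
      have := h4.infix hinf
      exact (List.isChain_cons_cons.mp (List.isChain_cons_cons.mp this).2).1
    have hncvx : ¬ (E x v ∧ E y v) := fun ⟨a, b⟩ => hnc ⟨x, y, hinf, a, b⟩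
    -- key : from an ancestor of v in (W ∪ St) ∪ O, contradiction
    have key : ∀ d, (d ∈ W ∪ St ∨ d ∈ O) → Ancestor E v d → False := by
      intro d hd hvd
      obtain ⟨hdO, hdM⟩ := hM v hvM d hvd
      rcases hd with (hdW | hdSt) | hdO'
      · exact hdO (Or.inl (hW hdW).1)
      · rcases hSt hdSt with h | h
        · exact hdO (Or.inr h)
        · exact hvSt (hdM h ▸ hdSt)
      · exact hdO (Or.inl hdO')
    obtain ⟨s, t, hl⟩ := hinf
    have hvout : E v x ∨ E v y := by
      rcases hedge with hxv | hvx
      · rcases hedge2 with hvy | hyv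
        · exact Or.inr hvy
        · exact absurd ⟨hxv, hyv⟩ hncvx
      · exact Or.inl hvx
    rcases hvout with hvx | hvy
    · -- go backwards: use l.reverse
      have hlast' : l.reverse.getLast? = some Oi := by
        rw [List.getLast?_reverse, h1]
      have hchain' : l.reverse.Chain' (fun u v => E u v ∨ E v u) := by
        refine List.isChain_reverse.mpr ?_
        exact h4.imp (fun a b h => h.symm)
      have hcol' : ∀ u w z, [u, w, z] <:+: l.reverse → E u w → E z w →
          ∃ d ∈ (W ∪ St), Ancestor E w d := by
        intro u w z hinf' h1' h2'
        have : [z, w, u] <:+: l := by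
          rw [← List.reverse_infix, List.reverse_reverse] at hinf'
          simpa using hinf'
        exact hcol z w u this h2' h1'
      have hsuf : (v :: x :: s.reverse) <:+ l.reverse := by
        refine ⟨(y :: t).reverse, ?_⟩
        subst hl
        simp [List.reverse_append]
      obtain ⟨d, hd, hvd⟩ :=
        forward_anc E (W ∪ St) Oi l.reverse hlast' hchain' hcol' s.reverse v x hsuf hvx
      exact key d (by rcases hd with h | h; exacts [Or.inl h, Or.inr (h ▸ hOi)]) hvd
    · have hsuf : (v :: y :: t) <:+ l := by
        refine ⟨s ++ [x], ?_⟩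
        subst hl
        simp
      obtain ⟨d, hd, hvd⟩ :=
        forward_anc E (W ∪ St) Oj l h2 h4 hcol t v y hsuf hvy
      exact key d (by rcases hd with h | h; exacts [Or.inl h, Or.inr (h ▸ hOj)]) hvd
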